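/- Fix nonnegative integers m₁, m₂ with m = m₁+m₂ ≥ 1 and σ ∈ {1,2}. In the preferential attachment process G^n_m, for any vertex v and any set W ⊆ {1,...,v-1}, let E be any event that involves only edges stemming from vertices older than v (i.e., from vertices in {1,...,v-1}). Then, conditional upon E, the probability that none of the m_σ designated edges stemming from v is attached to a vertex of W is at most (1 - |W|/(2v))^{m_σ}. -/

import Mathlib

open MeasureTheory Finset
open scoped Classical

/-- Degree of vertex `s` at time `r` in the `G₁`-preferential attachment process with
attachment map `g`: each vertex `u ∈ {1,...,r}` contributes one half-edge as a sender and
one half-edge to its target `g u` (so a loop counts twice towards the degree). -/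
def paDeg (g : ℕ → ℕ) (s r : ℕ) : ℕ :=
  (if s ∈ Finset.Icc 1 r then 1 else 0) +
    ((Finset.Icc 1 r).filter (fun u => g u = s)).card

/-- The attachment weight of step `t`: in the preferential attachment process the edge
stemming from `t` is attached to `s` with probability `paWeight · /(2t-1)`, where the
weight is the current degree of `s` for `s < t`, and `1` for the loop `s = t`. -/
def paWeight (g : ℕ → ℕ) (t : ℕ) : ℕ :=
  if g t = t then 1 else paDeg g (g t) (t - 1)

/-- `IsPA N μ F` states that the random attachment map `F` is a preferential attachment
process (Bollobás–Riordan `G₁` process) of length `N` on the probability space `(Ω, μ)`: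
each `F · t ∈ {1,...,t}`, and conditionally on the past, step `t` attaches to a vertex
with probability proportional to its current degree (the new half-edge counting one). -/
def IsPA {Ω : Type*} [MeasurableSpace Ω] (N : ℕ) (μ : MeasureTheory.Measure Ω)
    (F : Ω → ℕ → ℕ) : Prop :=
  (∀ᵐ ω ∂μ, ∀ t ∈ Finset.Icc 1 N, F ω t ∈ Finset.Icc 1 t) ∧
  ∀ t ∈ Finset.Icc 1 N, ∀ g : ℕ → ℕ,
    μ {ω | ∀ u ∈ Finset.Icc 1 t, F ω u = g u}
      = μ {ω | ∀ u ∈ Finset.Icc 1 (t - 1), F ω u = g u}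
          * (paWeight g t : ENNReal) / ((2 * t - 1 : ℕ) : ENNReal)

/-- The group model `G^n_m`: vertex `v` corresponds to mini-vertices
`m(v-1)+1, ..., mv` of the `G₁` process; mini-vertex `j` belongs to vertex `⌈j/m⌉`. -/
def paVertOf (m j : ℕ) : ℕ := (j + m - 1) / m

private lemma paDeg_congr' {g g' : ℕ → ℕ} {r : ℕ} (s : ℕ)
    (h : ∀ u ∈ Finset.Icc 1 r, g u = g' u) : paDeg g s r = paDeg g' s r := by
  unfold paDeg
  congr 1
  congr 1
  apply Finset.filter_congr
  intro u hu
  simp [h u hu]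

private lemma paDeg_sum' {g : ℕ → ℕ} {r : ℕ}
    (hg : ∀ u ∈ Finset.Icc 1 r, g u ∈ Finset.Icc 1 u) :
    ∑ s ∈ Finset.Icc 1 r, paDeg g s r = 2 * r := by
  unfold paDeg
  rw [Finset.sum_add_distrib]
  have h1 : ∑ s ∈ Finset.Icc 1 r, (if s ∈ Finset.Icc 1 r then 1 else 0) = r := by
    rw [Finset.sum_congr rfl (fun s hs => if_pos hs)]
    simp [Nat.card_Icc]
  have h2 : ∑ s ∈ Finset.Icc 1 r, ((Finset.Icc 1 r).filter (fun u => g u = s)).card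
      = (Finset.Icc 1 r).card := by
    rw [← Finset.card_eq_sum_card_fiberwise]
    intro u hu
    have := hg u hu
    simp only [Finset.mem_coe, Finset.mem_Icc] at *
    omega
  rw [h1, h2, Nat.card_Icc]
  omega

private lemma Icc_one_eq_insert' {t : ℕ} (ht : 1 ≤ t) :
    Finset.Icc 1 t = insert t (Finset.Icc 1 (t - 1)) := by
  ext u
  simp only [Finset.mem_Icc, Finset.mem_insert]
  omega

private lemma weight_total' {g : ℕ → ℕ} {t : ℕ} (ht : 1 ≤ t)
    (hg : ∀ u ∈ Finset.Icc 1 (t - 1), g u ∈ Finset.Icc 1 u) :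
    ∑ a ∈ Finset.Icc 1 t, paWeight (Function.update g t a) t = 2 * t - 1 := by
  rw [Icc_one_eq_insert' ht, Finset.sum_insert (by simp [Finset.mem_Icc]; omega)]
  have hloop : paWeight (Function.update g t t) t = 1 := by
    unfold paWeight
    rw [Function.update_self]
    simp
  have hrest : ∀ a ∈ Finset.Icc 1 (t - 1),
      paWeight (Function.update g t a) t = paDeg g a (t - 1) := by
    intro a ha
    have hat : a ≠ t := by simp only [Finset.mem_Icc] at ha; omega
    unfold paWeight
    rw [Function.update_self]
    rw [if_neg hat]
    apply paDeg_congr'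
    intro u hu
    have : u ≠ t := by simp only [Finset.mem_Icc] at hu; omega
    simp [Function.update_of_ne this]
  rw [Finset.sum_congr rfl hrest, paDeg_sum' hg, hloop]
  omega

private noncomputable def pat : ℕ → Finset (ℕ → ℕ)
  | 0 => {fun _ => 0}
  | (t + 1) => ((pat t) ×ˢ Finset.Icc 1 (t + 1)).image fun p => Function.update p.1 (t + 1) p.2

private lemma pat_spec : ∀ t, ∀ g ∈ pat t,
    (∀ u ∈ Finset.Icc 1 t, g u ∈ Finset.Icc 1 u) ∧ ∀ u, u ∉ Finset.Icc 1 t → g u = 0 := by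
  intro t
  induction t with
  | zero =>
    intro g hg
    simp only [pat, Finset.mem_singleton] at hg
    subst hg
    simp
  | succ t ih =>
    intro g hg
    simp only [pat, Finset.mem_image, Finset.mem_product] at hg
    obtain ⟨⟨g', a⟩, ⟨hg', ha⟩, rfl⟩ := hg
    obtain ⟨ih1, ih2⟩ := ih g' hg'
    constructor
    · intro u hu
      by_cases hut : u = t + 1
      · subst hut; simpa [Function.update_self] using ha
      · rw [Function.update_of_ne hut]
        apply ih1
        simp only [Finset.mem_Icc] at *
        omega
    · intro u hu
      have hut : u ≠ t + 1 := by
        intro h; subst h; simp [Finset.mem_Icc] at hu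
      rw [Function.update_of_ne hut]
      apply ih2
      simp only [Finset.mem_Icc] at *
      omega

private lemma pat_mem_of : ∀ t (g : ℕ → ℕ),
    (∀ u ∈ Finset.Icc 1 t, g u ∈ Finset.Icc 1 u) → (∀ u, u ∉ Finset.Icc 1 t → g u = 0) →
    g ∈ pat t := by
  intro t
  induction t with
  | zero =>
    intro g _ h2
    have : g = fun _ => 0 := by
      funext u
      exact h2 u (by simp)
    simp [pat, this]
  | succ t ih =>
    intro g h1 h2
    set g' : ℕ → ℕ := Function.update g (t + 1) 0 with hg'def
    have hg' : g' ∈ pat t := by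
      apply ih
      · intro u hu
        have hut : u ≠ t + 1 := by simp only [Finset.mem_Icc] at hu; omega
        rw [hg'def, Function.update_of_ne hut]
        apply h1
        simp only [Finset.mem_Icc] at *
        omega
      · intro u hu
        by_cases hut : u = t + 1
        · subst hut; simp [hg'def]
        · rw [hg'def, Function.update_of_ne hut]
          apply h2
          simp only [Finset.mem_Icc] at *
          omega
    have hval : g (t + 1) ∈ Finset.Icc 1 (t + 1) := h1 _ (by simp)
    have hupd : g = Function.update g' (t + 1) (g (t + 1)) := by
      funext u
      by_cases hut : u = t + 1
      · subst hut; simp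
      · rw [Function.update_of_ne hut, hg'def, Function.update_of_ne hut]
    simp only [pat, Finset.mem_image]
    exact ⟨(g', g (t + 1)), by simp [Finset.mem_product, hg', hval], hupd.symm⟩

private lemma pat_sum (t : ℕ) (φ : (ℕ → ℕ) → ENNReal) :
    ∑ g ∈ pat (t + 1), φ g
      = ∑ g ∈ pat t, ∑ a ∈ Finset.Icc 1 (t + 1), φ (Function.update g (t + 1) a) := by
  rw [show pat (t + 1) = ((pat t) ×ˢ Finset.Icc 1 (t + 1)).image
      (fun p => Function.update p.1 (t + 1) p.2) from rfl]
  rw [Finset.sum_image, Finset.sum_product]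
  intro p hp q hq hpq
  simp only [Finset.coe_product, Set.mem_prod, Finset.mem_coe, Finset.mem_product] at hp hq
  have hp2 := (pat_spec t p.1 hp.1).2 (t + 1) (by simp [Finset.mem_Icc])
  have hq2 := (pat_spec t q.1 hq.1).2 (t + 1) (by simp [Finset.mem_Icc])
  have h2 : p.2 = q.2 := by
    have := congrFun hpq (t + 1)
    simpa using this
  have h1 : p.1 = q.1 := by
    funext u
    by_cases hut : u = t + 1
    · subst hut; rw [hp2, hq2]
    · have := congrFun hpq u
      simpa [Function.update_of_ne hut] using this
  exact Prod.ext h1 h2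

private lemma mul_pred' {m w : ℕ} (hw : 1 ≤ w) : m * (w - 1) + m = m * w := by
  cases w with
  | zero => omega
  | succ w => simp [Nat.mul_succ]

private lemma paVertOf_eq' {m w a : ℕ} (hm : 1 ≤ m) (hw : 1 ≤ w)
    (h1 : m * (w - 1) + 1 ≤ a) (h2 : a ≤ m * w) : paVertOf m a = w := by
  unfold paVertOf
  have hmw := mul_pred' (m := m) hw
  apply Nat.div_eq_of_lt_le
  · have : w * m = m * w := mul_comm w m
    omega
  · have : (w + 1) * m = m * w + m := by ring
    omega

private lemma paVertOf_zero' {m : ℕ} (hm : 1 ≤ m) : paVertOf m 0 = 0 := by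
  unfold paVertOf
  apply Nat.div_eq_of_lt
  omega

private lemma paVertOf_le' {m v a : ℕ} (hm : 1 ≤ m) (hv : 1 ≤ v)
    (h : paVertOf m a ≤ v - 1) : a ≤ m * (v - 1) := by
  unfold paVertOf at h
  have h2 : a + m - 1 < m * (v - 1) + m := by
    have h3 := (Nat.div_lt_iff_lt_mul (by omega : 0 < m)).1
      (show (a + m - 1) / m < v - 1 + 1 by omega)
    have : (v - 1 + 1) * m = m * (v - 1) + m := by ring
    omega
  omega

private lemma hit_weight {m v t : ℕ} {W : Finset ℕ} (g : ℕ → ℕ) (hm : 1 ≤ m) (hv : 1 ≤ v)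
    (hW : W ⊆ Finset.Icc 1 (v - 1)) (ht1 : m * (v - 1) < t) (ht2 : t ≤ m * v)
    (hg : ∀ u ∈ Finset.Icc 1 (t - 1), g u ∈ Finset.Icc 1 u) :
    (∑ a ∈ (Finset.Icc 1 t).filter (fun a => paVertOf m a ∉ W),
        paWeight (Function.update g t a) t) + m * W.card ≤ 2 * t - 1 := by
  have ht0 : 1 ≤ t := by omega
  have htot := weight_total' ht0 hg
  have hsplit := Finset.sum_filter_add_sum_filter_not (Finset.Icc 1 t)
      (fun a => paVertOf m a ∉ W) (fun a => paWeight (Function.update g t a) t)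
  have hhit : m * W.card ≤ ∑ a ∈ (Finset.Icc 1 t).filter (fun a => ¬ paVertOf m a ∉ W),
      paWeight (Function.update g t a) t := by
    have hsub : W.biUnion (fun w => Finset.Icc (m * (w - 1) + 1) (m * w))
        ⊆ (Finset.Icc 1 t).filter (fun a => ¬ paVertOf m a ∉ W) := by
      intro a ha
      simp only [Finset.mem_biUnion] at ha
      obtain ⟨w, hwW, haw⟩ := ha
      have hw1 : 1 ≤ w ∧ w ≤ v - 1 := by simpa [Finset.mem_Icc] using hW hwW
      simp only [Finset.mem_Icc] at haw
      have hpv : paVertOf m a = w := paVertOf_eq' hm hw1.1 haw.1 haw.2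
      have hmw : m * w ≤ m * (v - 1) := Nat.mul_le_mul_left m (by omega)
      simp only [Finset.mem_filter, Finset.mem_Icc, hpv, not_not]
      exact ⟨⟨by omega, by omega⟩, hwW⟩
    have hdisj : (W : Set ℕ).PairwiseDisjoint (fun w => Finset.Icc (m * (w - 1) + 1) (m * w)) := by
      intro w hw w' hw' hne
      simp only [Function.onFun]
      rw [Finset.disjoint_left]
      intro a ha ha'
      have h1 : 1 ≤ w ∧ w ≤ v - 1 := by simpa [Finset.mem_Icc] using hW hw
      have h1' : 1 ≤ w' ∧ w' ≤ v - 1 := by simpa [Finset.mem_Icc] using hW hw'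
      simp only [Finset.mem_Icc] at ha ha'
      exact hne ((paVertOf_eq' hm h1.1 ha.1 ha.2).symm.trans (paVertOf_eq' hm h1'.1 ha'.1 ha'.2))
    have hcard : (W.biUnion (fun w => Finset.Icc (m * (w - 1) + 1) (m * w))).card
        = m * W.card := by
      rw [Finset.card_biUnion hdisj]
      have hcc : ∀ w ∈ W, (Finset.Icc (m * (w - 1) + 1) (m * w)).card = m := by
        intro w hw
        have hw1 : 1 ≤ w := by
          have := hW hw; simp only [Finset.mem_Icc] at this; omega
        rw [Nat.card_Icc]
        have := mul_pred' (m := m) hw1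
        omega
      rw [Finset.sum_congr rfl hcc, Finset.sum_const, smul_eq_mul, mul_comm]
    calc m * W.card
        = (W.biUnion (fun w => Finset.Icc (m * (w - 1) + 1) (m * w))).card := hcard.symm
      _ ≤ ((Finset.Icc 1 t).filter (fun a => ¬ paVertOf m a ∉ W)).card :=
          Finset.card_le_card hsub
      _ = ∑ a ∈ (Finset.Icc 1 t).filter (fun a => ¬ paVertOf m a ∉ W), 1 := by simp
      _ ≤ _ := by
          apply Finset.sum_le_sum
          intro a ha
          simp only [Finset.mem_filter, Finset.mem_Icc, not_not] at ha
          obtain ⟨⟨ha1, hat⟩, haW⟩ := ha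
          have hav : paVertOf m a ≤ v - 1 := by
            have := hW haW; simp only [Finset.mem_Icc] at this; omega
          have hale : a ≤ m * (v - 1) := paVertOf_le' hm hv hav
          have hant : a ≠ t := by omega
          unfold paWeight
          rw [Function.update_self, if_neg hant]
          unfold paDeg
          have : a ∈ Finset.Icc 1 (t - 1) := by simp only [Finset.mem_Icc]; omega
          rw [if_pos this]
          omega
  omega

private lemma key_step {Ω : Type*} [MeasurableSpace Ω] (μ : Measure Ω) (N : ℕ)
    (F : Ω → ℕ → ℕ) (hF : IsPA N μ F) (ι : (ℕ → ℕ) → ENNReal) (t : ℕ) (htN : t + 1 ≤ N)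
    (A : Finset ℕ) (q : ENNReal)
    (hQ : ∀ g ∈ pat t, ∀ a ∈ Finset.Icc 1 (t + 1),
      ι (Function.update g (t + 1) a) = ι g * (if a ∈ A then 1 else 0))
    (hq : ∀ g ∈ pat t,
      ((∑ a ∈ (Finset.Icc 1 (t + 1)) ∩ A,
          paWeight (Function.update g (t + 1) a) (t + 1) : ℕ) : ENNReal)
        ≤ q * ((2 * (t + 1) - 1 : ℕ) : ENNReal)) :
    ∑ g ∈ pat (t + 1), ι g * μ {ω | ∀ u ∈ Finset.Icc 1 (t + 1), F ω u = g u}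
      ≤ q * ∑ g ∈ pat t, ι g * μ {ω | ∀ u ∈ Finset.Icc 1 t, F ω u = g u} := by
  have hD0 : ((2 * (t + 1) - 1 : ℕ) : ENNReal) ≠ 0 := by
    simp only [ne_eq, Nat.cast_eq_zero]
    omega
  have hDtop : ((2 * (t + 1) - 1 : ℕ) : ENNReal) ≠ ⊤ := ENNReal.natCast_ne_top _
  rw [pat_sum, Finset.mul_sum]
  apply Finset.sum_le_sum
  intro g hg
  have hcyl : ∀ a ∈ Finset.Icc 1 (t + 1),
      μ {ω | ∀ u ∈ Finset.Icc 1 (t + 1), F ω u = Function.update g (t + 1) a u}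
        = μ {ω | ∀ u ∈ Finset.Icc 1 t, F ω u = g u}
            * (paWeight (Function.update g (t + 1) a) (t + 1) : ENNReal)
            / ((2 * (t + 1) - 1 : ℕ) : ENNReal) := by
    intro a _
    have hpa := hF.2 (t + 1) (by simp only [Finset.mem_Icc]; omega) (Function.update g (t + 1) a)
    rw [hpa]
    congr 2
    · congr 1
      ext ω
      simp only [Set.mem_setOf_eq, Nat.add_sub_cancel]
      apply forall₂_congr
      intro u hu
      have hut : u ≠ t + 1 := by simp only [Finset.mem_Icc] at hu; omega
      rw [Function.update_of_ne hut]
  calc ∑ a ∈ Finset.Icc 1 (t + 1),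
        ι (Function.update g (t + 1) a)
          * μ {ω | ∀ u ∈ Finset.Icc 1 (t + 1), F ω u = Function.update g (t + 1) a u}
      = ∑ a ∈ Finset.Icc 1 (t + 1), (if a ∈ A then
          ((paWeight (Function.update g (t + 1) a) (t + 1) : ENNReal)
            * (ι g * (μ {ω | ∀ u ∈ Finset.Icc 1 t, F ω u = g u}
                / ((2 * (t + 1) - 1 : ℕ) : ENNReal)))) else 0) := by
        apply Finset.sum_congr rfl
        intro a ha
        rw [hQ g hg a ha, hcyl a ha]
        by_cases hca : a ∈ A
        · rw [if_pos hca, if_pos hca, mul_one, div_eq_mul_inv, div_eq_mul_inv]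
          ring
        · rw [if_neg hca, if_neg hca, mul_zero, zero_mul]
    _ = (∑ a ∈ (Finset.Icc 1 (t + 1)) ∩ A,
          (paWeight (Function.update g (t + 1) a) (t + 1) : ENNReal))
          * (ι g * (μ {ω | ∀ u ∈ Finset.Icc 1 t, F ω u = g u}
              / ((2 * (t + 1) - 1 : ℕ) : ENNReal))) := by
        rw [Finset.sum_ite_mem, Finset.sum_mul]
    _ ≤ (q * ((2 * (t + 1) - 1 : ℕ) : ENNReal))
          * (ι g * (μ {ω | ∀ u ∈ Finset.Icc 1 t, F ω u = g u}
              / ((2 * (t + 1) - 1 : ℕ) : ENNReal))) := by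
        apply mul_le_mul_left
        rw [← Nat.cast_sum]
        exact hq g hg
    _ = q * (ι g * μ {ω | ∀ u ∈ Finset.Icc 1 t, F ω u = g u}) := by
        rw [div_eq_mul_inv]
        have hr : (q * ((2 * (t + 1) - 1 : ℕ) : ENNReal))
            * (ι g * (μ {ω | ∀ u ∈ Finset.Icc 1 t, F ω u = g u}
                * (((2 * (t + 1) - 1 : ℕ) : ENNReal))⁻¹))
            = (q * (ι g * μ {ω | ∀ u ∈ Finset.Icc 1 t, F ω u = g u}))
              * (((2 * (t + 1) - 1 : ℕ) : ENNReal)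
                * (((2 * (t + 1) - 1 : ℕ) : ENNReal))⁻¹) := by ring
        rw [hr, ENNReal.mul_inv_cancel hD0 hDtop, mul_one]

private lemma cast_bound {K D c m v : ℕ} (hv : 1 ≤ v) (hc : c ≤ v - 1)
    (hKD : K + m * c ≤ D) (hD : D ≤ 2 * m * v) :
    (K : ENNReal) ≤ ENNReal.ofReal (1 - (c : ℝ) / (2 * v)) * (D : ENNReal) := by
  have h2v : (0:ℝ) < 2 * v := by
    have : (1:ℝ) ≤ v := by exact_mod_cast hv
    linarith
  have hv' : (1:ℝ) ≤ v := by exact_mod_cast hv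
  have hcv : (c:ℝ) ≤ (v:ℝ) - 1 := by
    have h := (Nat.cast_le (α := ℝ)).2 hc
    rwa [Nat.cast_sub hv, Nat.cast_one] at h
  have hq0 : (0:ℝ) ≤ 1 - (c:ℝ) / (2 * v) := by
    rw [sub_nonneg, div_le_one h2v]
    linarith
  have hreal : (K:ℝ) ≤ (1 - (c:ℝ) / (2 * v)) * D := by
    have hKD' : (K:ℝ) + m * c ≤ D := by exact_mod_cast hKD
    have hD' : (D:ℝ) ≤ 2 * m * v := by exact_mod_cast hD
    have hc0 : (0:ℝ) ≤ c := Nat.cast_nonneg c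
    have hkey : (c:ℝ) / (2 * v) * D ≤ m * c := by
      rw [div_mul_eq_mul_div, div_le_iff₀ h2v]
      nlinarith
    rw [sub_mul, one_mul]
    linarith
  calc (K:ENNReal) = ENNReal.ofReal (K:ℝ) := (ENNReal.ofReal_natCast K).symm
    _ ≤ ENNReal.ofReal ((1 - (c:ℝ) / (2 * v)) * D) := ENNReal.ofReal_le_ofReal hreal
    _ = _ := by rw [ENNReal.ofReal_mul hq0, ENNReal.ofReal_natCast]

theorem stmt_12 {Ω : Type*} [MeasurableSpace Ω] (μ : Measure Ω) [IsProbabilityMeasure μ]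
    (n m m₁ m₂ : ℕ) (hm : m = m₁ + m₂) (hm1 : 1 ≤ m)
    (F : Ω → ℕ → ℕ) (hF : IsPA (m * n) μ F)
    (σ : ℕ) (hσ : σ = 1 ∨ σ = 2)
    (mσ : ℕ) (hmσ : mσ = if σ = 1 then m₁ else m₂)
    (v : ℕ) (hv : v ∈ Finset.Icc 1 n)
    (I : Finset ℕ)
    (hI : I = if σ = 1 then Finset.Icc (m * (v - 1) + 1) (m * (v - 1) + m₁)
      else Finset.Icc (m * (v - 1) + m₁ + 1) (m * v))
    (W : Finset ℕ) (hW : W ⊆ Finset.Icc 1 (v - 1))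
    (E : Set Ω) (S : Set (ℕ → ℕ)) (hE : E = {ω | F ω ∈ S})
    (hS : ∀ g g' : ℕ → ℕ, (∀ u ∈ Finset.Icc 1 (m * (v - 1)), g u = g' u) →
      (g ∈ S ↔ g' ∈ S)) :
    μ ({ω | ∀ j ∈ I, paVertOf m (F ω j) ∉ W} ∩ E)
      ≤ ENNReal.ofReal ((1 - (W.card : ℝ) / (2 * v)) ^ mσ) * μ E := by
  obtain ⟨hv1, hvn⟩ := Finset.mem_Icc.1 hv
  set base := m * (v - 1) with hbase
  have hbasev : base + m = m * v := mul_pred' hv1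
  have hmvn : m * v ≤ m * n := Nat.mul_le_mul_left m hvn
  have hbasen : base ≤ m * n := by omega
  -- properties of I
  have hIbound : ∀ j ∈ I, base + 1 ≤ j ∧ j ≤ m * v := by
    intro j hj
    rcases hσ with h1 | h2
    · subst h1
      norm_num at hI
      rw [hI, Finset.mem_Icc] at hj
      omega
    · subst h2
      norm_num at hI
      rw [hI, Finset.mem_Icc] at hj
      omega
  have hcardI : I.card = mσ := by
    rcases hσ with h1 | h2
    · subst h1
      norm_num at hI hmσ
      rw [hI, Nat.card_Icc]
      omega
    · subst h2
      norm_num at hI hmσ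
      rw [hI, Nat.card_Icc]
      omega
  have hWc : W.card ≤ v - 1 := by
    have := Finset.card_le_card hW
    simpa [Nat.card_Icc] using this
  have hWv : ∀ w ∈ W, 1 ≤ w ∧ w ≤ v - 1 := by
    intro w hw
    have := hW hw
    simpa [Finset.mem_Icc] using this
  have h0W : (0 : ℕ) ∉ W := fun h => by have := (hWv 0 h).1; omega
  have hq0R : (0:ℝ) ≤ 1 - (W.card : ℝ) / (2 * v) := by
    have h2v : (0:ℝ) < 2 * v := by
      have : (1:ℝ) ≤ v := by exact_mod_cast hv1
      linarith
    have hcv : (W.card:ℝ) ≤ (v:ℝ) - 1 := by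
      have h := (Nat.cast_le (α := ℝ)).2 hWc
      rwa [Nat.cast_sub hv1, Nat.cast_one] at h
    have : (1:ℝ) ≤ v := by exact_mod_cast hv1
    rw [sub_nonneg, div_le_one h2v]
    linarith
  set q : ENNReal := ENNReal.ofReal (1 - (W.card : ℝ) / (2 * v)) with hq
  set Q : (ℕ → ℕ) → Prop := fun g => g ∈ S ∧ ∀ j ∈ I, paVertOf m (g j) ∉ W with hQdef
  set ind : (ℕ → ℕ) → ENNReal := fun g => if Q g then 1 else 0 with hinddef
  set X : ℕ → ENNReal := fun t => ∑ g ∈ pat t,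
    ind g * μ {ω | ∀ u ∈ Finset.Icc 1 t, F ω u = g u} with hXdef
  -- generic iff for updates
  have hQupd : ∀ k, ∀ g ∈ pat (base + k), ∀ a,
      (Q (Function.update g (base + k + 1) a)
        ↔ (Q g ∧ (base + k + 1 ∈ I → paVertOf m a ∉ W))) := by
    intro k g hg a
    have hg0 : g (base + k + 1) = 0 :=
      (pat_spec _ g hg).2 (base + k + 1) (by simp [Finset.mem_Icc])
    have hSiff : Function.update g (base + k + 1) a ∈ S ↔ g ∈ S := by
      apply hS
      intro u hu
      have hut : u ≠ base + k + 1 := by simp only [Finset.mem_Icc] at hu; omega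
      rw [Function.update_of_ne hut]
    simp only [hQdef]
    constructor
    · rintro ⟨hQS, hQav⟩
      refine ⟨⟨hSiff.1 hQS, ?_⟩, ?_⟩
      · intro j hj
        by_cases hjt : j = base + k + 1
        · subst hjt
          rw [hg0, paVertOf_zero' hm1]
          exact h0W
        · have := hQav j hj
          rwa [Function.update_of_ne hjt] at this
      · intro ht'I
        have := hQav _ ht'I
        rwa [Function.update_self] at this
    · rintro ⟨⟨hQS, hQav⟩, hCa⟩
      refine ⟨hSiff.2 hQS, ?_⟩
      intro j hj
      by_cases hjt : j = base + k + 1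
      · subst hjt
        rw [Function.update_self]
        exact hCa hj
      · rw [Function.update_of_ne hjt]
        exact hQav j hj
  -- Step bound
  have hstep : ∀ k, base + k + 1 ≤ m * v →
      X (base + k + 1) ≤ (if base + k + 1 ∈ I then q else 1) * X (base + k) := by
    intro k hk
    by_cases hTI : base + k + 1 ∈ I
    · rw [if_pos hTI]
      have hkey := key_step μ (m * n) F hF ind (base + k) (by omega)
        ((Finset.Icc 1 (base + k + 1)).filter (fun a => paVertOf m a ∉ W)) q
        (by
          intro g hg a ha
          have hiff := hQupd k g hg a
          have hmem : a ∈ (Finset.Icc 1 (base + k + 1)).filter (fun a => paVertOf m a ∉ W)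
              ↔ (base + k + 1 ∈ I → paVertOf m a ∉ W) := by
            rw [Finset.mem_filter]
            constructor
            · rintro ⟨_, h⟩ _
              exact h
            · intro h
              exact ⟨ha, h hTI⟩
          simp only [hinddef]
          by_cases hQg : Q g
          · rw [if_pos hQg, one_mul]
            by_cases hC : a ∈ (Finset.Icc 1 (base + k + 1)).filter (fun a => paVertOf m a ∉ W)
            · rw [if_pos hC, if_pos (hiff.2 ⟨hQg, hmem.1 hC⟩)]
            · rw [if_neg hC, if_neg (fun hQu => hC (hmem.2 (hiff.1 hQu).2))]
          · rw [if_neg hQg, zero_mul, if_neg (fun hQu => hQg (hiff.1 hQu).1)])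
        (by
          intro g hg
          have hgr : ∀ u ∈ Finset.Icc 1 (base + k + 1 - 1), g u ∈ Finset.Icc 1 u := by
            simpa using (pat_spec _ g hg).1
          have hinter : Finset.Icc 1 (base + k + 1)
              ∩ (Finset.Icc 1 (base + k + 1)).filter (fun a => paVertOf m a ∉ W)
              = (Finset.Icc 1 (base + k + 1)).filter (fun a => paVertOf m a ∉ W) :=
            Finset.inter_eq_right.2 (Finset.filter_subset _ _)
          rw [hinter, hq]
          have hhw := hit_weight (m := m) (v := v) (t := base + k + 1) (W := W) g hm1 hv1 hW
            (by omega) (by omega) hgr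
          refine cast_bound hv1 hWc hhw ?_
          have h2 : 2 * m * v = 2 * (m * v) := by ring
          omega)
      simpa only [hXdef] using hkey
    · rw [if_neg hTI]
      have hkey := key_step μ (m * n) F hF ind (base + k) (by omega)
        (Finset.Icc 1 (base + k + 1)) 1
        (by
          intro g hg a ha
          have hiff := hQupd k g hg a
          simp only [hinddef]
          by_cases hQg : Q g
          · rw [if_pos hQg, one_mul, if_pos ha,
              if_pos (hiff.2 ⟨hQg, fun h => absurd h hTI⟩)]
          · rw [if_neg hQg, zero_mul, if_neg (fun hQu => hQg (hiff.1 hQu).1)])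
        (by
          intro g hg
          have hgr : ∀ u ∈ Finset.Icc 1 (base + k + 1 - 1), g u ∈ Finset.Icc 1 u := by
            simpa using (pat_spec _ g hg).1
          rw [Finset.inter_self, weight_total' (by omega) hgr, one_mul])
      simpa only [hXdef] using hkey
  -- Chain
  have hchain : ∀ k, base + k ≤ m * v →
      X (base + k) ≤ q ^ ((I.filter (fun j => j ≤ base + k)).card) * X base := by
    intro k
    induction k with
    | zero =>
      intro _
      have h0 : (I.filter (fun j => j ≤ base + 0)).card = 0 := by
        rw [Finset.card_eq_zero, Finset.filter_eq_empty_iff]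
        intro j hj
        have := hIbound j hj
        omega
      rw [h0, pow_zero, one_mul, Nat.add_zero]
    | succ k ih =>
      intro hk1
      have hk0 : base + k ≤ m * v := by omega
      have h1 := hstep k (by omega)
      have h2 := ih hk0
      by_cases hTI : base + k + 1 ∈ I
      · have hins : I.filter (fun j => j ≤ base + (k + 1))
            = insert (base + k + 1) (I.filter (fun j => j ≤ base + k)) := by
          ext j
          simp only [Finset.mem_filter, Finset.mem_insert]
          constructor
          · rintro ⟨hj, hjle⟩
            by_cases hje : j = base + k + 1
            · exact Or.inl hje
            · exact Or.inr ⟨hj, by omega⟩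
          · rintro (hje | ⟨hj, hjle⟩)
            · subst hje; exact ⟨hTI, by omega⟩
            · exact ⟨hj, by omega⟩
        have hnotmem : base + k + 1 ∉ I.filter (fun j => j ≤ base + k) := by
          simp only [Finset.mem_filter]
          rintro ⟨_, h⟩
          omega
        rw [hins, Finset.card_insert_of_notMem hnotmem, pow_succ]
        calc X (base + (k + 1)) = X (base + k + 1) := by rw [Nat.add_assoc]
          _ ≤ q * X (base + k) := by rwa [if_pos hTI] at h1
          _ ≤ q * (q ^ ((I.filter (fun j => j ≤ base + k)).card) * X base) :=
              mul_le_mul_right h2 q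
          _ = q ^ ((I.filter (fun j => j ≤ base + k)).card) * q * X base := by ring
      · have heq : I.filter (fun j => j ≤ base + (k + 1))
            = I.filter (fun j => j ≤ base + k) := by
          apply Finset.filter_congr
          intro j hj
          have hb := hIbound j hj
          constructor
          · intro h
            by_cases hje : j = base + k + 1
            · subst hje; exact absurd hj hTI
            · omega
          · intro h; omega
        rw [heq]
        calc X (base + (k + 1)) = X (base + k + 1) := by rw [Nat.add_assoc]
          _ ≤ 1 * X (base + k) := by rwa [if_neg hTI] at h1
          _ = X (base + k) := one_mul _
          _ ≤ _ := h2
  have hXT : X (m * v) ≤ q ^ mσ * X base := by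
    have hc := hchain m (by omega)
    rw [show base + m = m * v from hbasev] at hc
    have hfI : I.filter (fun j => j ≤ m * v) = I :=
      Finset.filter_true_of_mem (fun j hj => (hIbound j hj).2)
    rwa [hfI, hcardI] at hc
  -- Y ≤ 1
  have hY : ∀ t, t ≤ m * n →
      (∑ g ∈ pat t, μ {ω | ∀ u ∈ Finset.Icc 1 t, F ω u = g u}) ≤ 1 := by
    intro t
    induction t with
    | zero =>
      intro _
      have hp0 : pat 0 = {fun _ => 0} := rfl
      rw [hp0, Finset.sum_singleton]
      have huniv : {ω : Ω | ∀ u ∈ Finset.Icc 1 0, F ω u = (fun _ => (0:ℕ)) u} = Set.univ := by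
        ext ω; simp
      rw [huniv, measure_univ]
    | succ t ih =>
      intro ht
      have hstep1 := key_step μ (m * n) F hF (fun _ => (1:ENNReal)) t ht
        (Finset.Icc 1 (t + 1)) 1
        (by intro g _ a ha; simp [ha])
        (by
          intro g hg
          have hgr : ∀ u ∈ Finset.Icc 1 (t + 1 - 1), g u ∈ Finset.Icc 1 u := by
            simpa using (pat_spec _ g hg).1
          rw [Finset.inter_self, weight_total' (by omega) hgr, one_mul])
      have hfin : ∑ g ∈ pat (t + 1), 1 * μ {ω | ∀ u ∈ Finset.Icc 1 (t + 1), F ω u = g u}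
          ≤ 1 * ∑ g ∈ pat t, 1 * μ {ω | ∀ u ∈ Finset.Icc 1 t, F ω u = g u} := hstep1
      simp only [one_mul] at hfin
      exact le_trans hfin (ih (by omega))
  -- good set
  set G : Set Ω := {ω | ∀ u ∈ Finset.Icc 1 (m * n), F ω u ∈ Finset.Icc 1 u} with hGdef
  have hGc : μ Gᶜ = 0 := by
    have h := hF.1
    rw [MeasureTheory.ae_iff] at h
    rw [hGdef, Set.compl_setOf]
    exact h
  have hcover : ∀ (B : Set Ω) (Fn : Finset (ℕ → ℕ)) (T : ℕ),
      (∀ ω ∈ B ∩ G, ∃ g ∈ Fn, ω ∈ {ω' | ∀ u ∈ Finset.Icc 1 T, F ω' u = g u}) →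
      μ B ≤ ∑ g ∈ Fn, μ {ω | ∀ u ∈ Finset.Icc 1 T, F ω u = g u} := by
    intro B Fn T hwitness
    calc μ B ≤ μ ((B ∩ G) ∪ Gᶜ) := by
          apply measure_mono
          intro ω hω
          by_cases hωG : ω ∈ G
          · exact Or.inl ⟨hω, hωG⟩
          · exact Or.inr hωG
      _ ≤ μ (B ∩ G) + μ Gᶜ := measure_union_le _ _
      _ = μ (B ∩ G) := by rw [hGc, add_zero]
      _ ≤ μ (⋃ g ∈ Fn, {ω | ∀ u ∈ Finset.Icc 1 T, F ω u = g u}) := by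
          apply measure_mono
          intro ω hω
          obtain ⟨g, hg, hωg⟩ := hwitness ω hω
          exact Set.mem_biUnion hg hωg
      _ ≤ _ := measure_biUnion_finset_le _ _
  -- cutoff patterns
  have hcutoff : ∀ T, T ≤ m * n → ∀ ω ∈ G,
      (fun u => if u ∈ Finset.Icc 1 T then F ω u else 0) ∈ pat T := by
    intro T hT ω hωG
    have hωG' : ∀ u ∈ Finset.Icc 1 (m * n), F ω u ∈ Finset.Icc 1 u := hωG
    apply pat_mem_of
    · intro u hu
      rw [if_pos hu]
      apply hωG'
      simp only [Finset.mem_Icc] at *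
      omega
    · intro u hu
      rw [if_neg hu]
  -- X base ≤ μ E
  have hXbase : X base ≤ μ E := by
    set Sbad := ∑ g ∈ pat base,
      (if Q g then (0:ENNReal) else 1) * μ {ω | ∀ u ∈ Finset.Icc 1 base, F ω u = g u}
      with hSbad
    have hXY : X base + Sbad ≤ 1 := by
      have hXb : X base = ∑ g ∈ pat base,
          ind g * μ {ω | ∀ u ∈ Finset.Icc 1 base, F ω u = g u} := by
        simp only [hXdef]
      rw [hXb, hSbad, ← Finset.sum_add_distrib]
      have hptw : ∀ g ∈ pat base,
          ind g * μ {ω | ∀ u ∈ Finset.Icc 1 base, F ω u = g u}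
            + (if Q g then (0:ENNReal) else 1)
                * μ {ω | ∀ u ∈ Finset.Icc 1 base, F ω u = g u}
          = μ {ω | ∀ u ∈ Finset.Icc 1 base, F ω u = g u} := by
        intro g _
        simp only [hinddef]
        by_cases hQg : Q g
        · rw [if_pos hQg, if_pos hQg, one_mul, zero_mul, add_zero]
        · rw [if_neg hQg, if_neg hQg, zero_mul, one_mul, zero_add]
      rw [Finset.sum_congr rfl hptw]
      exact hY base hbasen
    have hEc : μ Eᶜ ≤ Sbad := by
      have hwit : ∀ ω ∈ Eᶜ ∩ G, ∃ g ∈ (pat base).filter (fun g => ¬ Q g),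
          ω ∈ {ω' | ∀ u ∈ Finset.Icc 1 base, F ω' u = g u} := by
        intro ω hω
        obtain ⟨hωEc, hωG⟩ := hω
        refine ⟨fun u => if u ∈ Finset.Icc 1 base then F ω u else 0, ?_, ?_⟩
        · rw [Finset.mem_filter]
          refine ⟨hcutoff base hbasen ω hωG, ?_⟩
          intro hQg
          rw [hQdef] at hQg
          have hgS : (fun u => if u ∈ Finset.Icc 1 base then F ω u else 0) ∈ S := hQg.1
          have hFS : F ω ∈ S := by
            rw [← hS (fun u => if u ∈ Finset.Icc 1 base then F ω u else 0) (F ω)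
              (fun u hu => if_pos hu)]
            exact hgS
          exact hωEc (by rw [hE]; exact hFS)
        · intro u hu
          exact (if_pos hu).symm
      refine le_trans (hcover Eᶜ ((pat base).filter (fun g => ¬ Q g)) base hwit)
        (le_of_eq ?_)
      rw [hSbad, Finset.sum_filter]
      apply Finset.sum_congr rfl
      intro g _
      by_cases hQg : Q g
      · rw [if_neg (not_not_intro hQg), if_pos hQg, zero_mul]
      · rw [if_pos hQg, if_neg hQg, one_mul]
    have hE1 : (1:ENNReal) - μ Eᶜ ≤ μ E := by
      have h := measure_union_le (μ := μ) E Eᶜ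
      rw [Set.union_compl_self, measure_univ] at h
      exact tsub_le_iff_right.2 h
    have hSne : Sbad ≠ ⊤ :=
      ne_top_of_le_ne_top ENNReal.one_ne_top (le_trans le_add_self hXY)
    calc X base ≤ 1 - Sbad := ENNReal.le_sub_of_add_le_right hSne hXY
      _ ≤ 1 - μ Eᶜ := tsub_le_tsub_left hEc 1
      _ ≤ μ E := hE1
  -- LHS ≤ X (m * v)
  have hLHS : μ ({ω | ∀ j ∈ I, paVertOf m (F ω j) ∉ W} ∩ E) ≤ X (m * v) := by
    have hwit : ∀ ω ∈ ({ω | ∀ j ∈ I, paVertOf m (F ω j) ∉ W} ∩ E) ∩ G,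
        ∃ g ∈ (pat (m * v)).filter Q,
          ω ∈ {ω' | ∀ u ∈ Finset.Icc 1 (m * v), F ω' u = g u} := by
      intro ω hω
      obtain ⟨⟨hωT, hωE⟩, hωG⟩ := hω
      refine ⟨fun u => if u ∈ Finset.Icc 1 (m * v) then F ω u else 0, ?_, ?_⟩
      · rw [Finset.mem_filter]
        refine ⟨hcutoff (m * v) hmvn ω hωG, ?_⟩
        rw [hQdef]
        refine ⟨?_, ?_⟩
        · show (fun u => if u ∈ Finset.Icc 1 (m * v) then F ω u else 0) ∈ S
          rw [hS (fun u => if u ∈ Finset.Icc 1 (m * v) then F ω u else 0) (F ω)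
            (fun u hu => if_pos (by
              simp only [Finset.mem_Icc] at hu ⊢
              omega))]
          rw [hE] at hωE
          exact hωE
        · intro j hj
          have hjb := hIbound j hj
          show paVertOf m (if j ∈ Finset.Icc 1 (m * v) then F ω j else 0) ∉ W
          rw [if_pos (by simp only [Finset.mem_Icc]; omega)]
          exact hωT j hj
      · intro u hu
        exact (if_pos hu).symm
    refine le_trans (hcover _ ((pat (m * v)).filter Q) (m * v) hwit) (le_of_eq ?_)
    have hXmv : X (m * v) = ∑ g ∈ pat (m * v),
        ind g * μ {ω | ∀ u ∈ Finset.Icc 1 (m * v), F ω u = g u} := by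
      simp only [hXdef]
    rw [hXmv, Finset.sum_filter]
    apply Finset.sum_congr rfl
    intro g _
    simp only [hinddef]
    by_cases hQg : Q g
    · rw [if_pos hQg, if_pos hQg, one_mul]
    · rw [if_neg hQg, if_neg hQg, zero_mul]
  -- assemble
  calc μ ({ω | ∀ j ∈ I, paVertOf m (F ω j) ∉ W} ∩ E)
      ≤ X (m * v) := hLHS
    _ ≤ q ^ mσ * X base := hXT
    _ ≤ q ^ mσ * μ E := mul_le_mul_right hXbase _
    _ = ENNReal.ofReal ((1 - (W.card : ℝ) / (2 * v)) ^ mσ) * μ E := by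
        rw [ENNReal.ofReal_pow hq0R, ← hq]
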